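/- With M = {(u,v) ∈ K{X}° × K{X}° : uf - v ∈ I_0} and G a finite subset of M containing (1,f) and such that {g : (0,g) ∈ G} is a Gröbner basis of I_0: if every J-pair of G is covered by G, then G is a strong Gröbner basis of M (the Cover Theorem for Tate algebras). -/

import Mathlib

open MvPowerSeries

namespace TateStmt

variable {n : ℕ} {O : Type*} [CommRing O]

/-- The Tate condition: the (π-adic) valuations of the coefficients tend to infinity. -/
def IsTate (π : O) (f : MvPowerSeries (Fin n) O) : Prop :=
  ∀ N : ℕ, {i : Fin n →₀ ℕ | ¬ π ^ N ∣ MvPowerSeries.coeff i f}.Finite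

/-- The integral Tate algebra `K{X}°`, as a subring of the ring of formal power series
over the valuation ring `O = K°`. -/
def TateAlgebra (n : ℕ) (O : Type*) [CommRing O] (π : O) :
    Subring (MvPowerSeries (Fin n) O) where
  carrier := {f | IsTate π f}
  zero_mem' := by
    intro N
    apply Set.Finite.subset (Set.finite_empty)
    intro i hi
    exact hi (Dvd.intro 0 (by simp))
  one_mem' := by
    intro N
    apply Set.Finite.subset (Set.finite_singleton (0 : Fin n →₀ ℕ))
    intro i hi
    by_contra h
    rw [Set.mem_singleton_iff] at h
    apply hi
    rw [MvPowerSeries.coeff_one, if_neg h]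
    exact Dvd.intro 0 (by simp)
  add_mem' := by
    intro f g hf hg N
    apply Set.Finite.subset ((hf N).union (hg N))
    intro i hi
    by_contra h
    simp only [Set.mem_union, Set.mem_setOf_eq, not_or, not_not] at h
    exact hi (by rw [map_add]; exact dvd_add h.1 h.2)
  neg_mem' := by
    intro f hf N
    apply Set.Finite.subset (hf N)
    intro i hi
    by_contra h
    simp only [Set.mem_setOf_eq, not_not] at h
    exact hi (by rw [map_neg]; exact (dvd_neg).mpr h)
  mul_mem' := by
    intro f g hf hg N
    apply Set.Finite.subset (Set.Finite.add (hf N) (hg N))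
    intro i hi
    by_contra h
    apply hi
    rw [MvPowerSeries.coeff_mul]
    apply Finset.dvd_sum
    intro p hp
    rw [Finset.HasAntidiagonal.mem_antidiagonal] at hp
    by_cases h1 : π ^ N ∣ MvPowerSeries.coeff p.1 f
    · exact Dvd.dvd.mul_right h1 _
    · by_cases h2 : π ^ N ∣ MvPowerSeries.coeff p.2 g
      · exact Dvd.dvd.mul_left h2 _
      · exact absurd (hp ▸ Set.add_mem_add h1 h2) h

/-- Tate monomials `π^a X^i`, identified with pairs `(a, i) ∈ ℕ × ℕ^n`. -/
abbrev TMon (n : ℕ) := ℕ × (Fin n →₀ ℕ)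

noncomputable def monMul (a b : TMon n) : TMon n := (a.1 + b.1, a.2 + b.2)
def monDvd (a b : TMon n) : Prop := a.1 ≤ b.1 ∧ a.2 ≤ b.2
noncomputable def monDiv (a b : TMon n) : TMon n := (a.1 - b.1, a.2 - b.2)
noncomputable def monLcm (a b : TMon n) : TMon n := (max a.1 b.1, a.2 ⊔ b.2)

/-- The valuation-first term order: compare valuations first (a *smaller* valuation gives a
*larger* term), then exponents via the monomial order `mo`. -/
def termLT (mo : MonomialOrder (Fin n)) (a b : TMon n) : Prop :=
  b.1 < a.1 ∨ (a.1 = b.1 ∧ mo.toSyn a.2 < mo.toSyn b.2)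

def termLE (mo : MonomialOrder (Fin n)) (a b : TMon n) : Prop :=
  a = b ∨ termLT mo a b

/-- Order on `Option (TMon n)`, where `none` (the "monomial" of `0`) is smallest. -/
def optLT (mo : MonomialOrder (Fin n)) : Option (TMon n) → Option (TMon n) → Prop
  | none, none => False
  | none, some _ => True
  | some _, none => False
  | some a, some b => termLT mo a b

def optLE (mo : MonomialOrder (Fin n)) (a b : Option (TMon n)) : Prop :=
  a = b ∨ optLT mo a b

noncomputable def optMul (t : TMon n) : Option (TMon n) → Option (TMon n)
  | none => none
  | some a => some (monMul t a)

/-- `(a, i)` is (the monomial of) a term of `f`: the coefficient of `X^i` has valuation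
exactly `a`. -/
def IsTerm (π : O) (f : MvPowerSeries (Fin n) O) (m : TMon n) : Prop :=
  π ^ m.1 ∣ MvPowerSeries.coeff m.2 f ∧ ¬ π ^ (m.1 + 1) ∣ MvPowerSeries.coeff m.2 f

/-- `m` is the leading monomial of `f`. -/
def IsLM (π : O) (mo : MonomialOrder (Fin n)) (f : MvPowerSeries (Fin n) O) (m : TMon n) :
    Prop :=
  IsTerm π f m ∧ ∀ m', IsTerm π f m' → termLE mo m' m

/-- `s` is the leading monomial of `f`, with the convention `LM 0 = none`. -/
def IsLMopt (π : O) (mo : MonomialOrder (Fin n)) (f : MvPowerSeries (Fin n) O) :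
    Option (TMon n) → Prop
  | none => f = 0
  | some m => IsLM π mo f m

/-- All coefficients of `f` are divisible by `π^N`, i.e. `val f ≥ N`. -/
def DvdAll (π : O) (N : ℕ) (f : MvPowerSeries (Fin n) O) : Prop :=
  ∀ i, π ^ N ∣ MvPowerSeries.coeff i f

/-- The Gauss valuation of `f` is exactly `N`. -/
def ValEq (π : O) (f : MvPowerSeries (Fin n) O) (N : ℕ) : Prop :=
  DvdAll π N f ∧ ¬ DvdAll π (N + 1) f

/-- `G` is a Gröbner basis of the ideal `I` of the (integral) Tate algebra. -/
def IsGB (π : O) (mo : MonomialOrder (Fin n)) (G : Set (TateAlgebra n O π))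
    (I : Ideal (TateAlgebra n O π)) : Prop :=
  (∀ g ∈ G, g ∈ I) ∧
    ∀ f ∈ I, (f : MvPowerSeries (Fin n) O) ≠ 0 → ∀ mf,
      IsLM π mo (f : MvPowerSeries (Fin n) O) mf →
        ∃ g ∈ G, ∃ mg, IsLM π mo (g : MvPowerSeries (Fin n) O) mg ∧ monDvd mg mf

/-- The module `M = {(u,v) : u f - v ∈ I₀}`. -/
def SigMod {π : O} (I0 : Ideal (TateAlgebra n O π)) (f : TateAlgebra n O π) :
    Set (TateAlgebra n O π × TateAlgebra n O π) :=
  {p | p.1 * f - p.2 ∈ I0}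

/-- `p = (u₁,v₁)` is top-reducible by `q = (u₂,v₂)`. -/
def TopRed (π : O) (mo : MonomialOrder (Fin n))
    (p q : TateAlgebra n O π × TateAlgebra n O π) : Prop :=
  (q.2 = 0 ∧ ∃ mu mq, IsLM π mo (p.1 : MvPowerSeries (Fin n) O) mu ∧
      IsLM π mo (q.1 : MvPowerSeries (Fin n) O) mq ∧ monDvd mq mu)
  ∨ (p.2 ≠ 0 ∧ q.2 ≠ 0 ∧
      ∃ m1 m2, IsLM π mo (p.2 : MvPowerSeries (Fin n) O) m1 ∧
        IsLM π mo (q.2 : MvPowerSeries (Fin n) O) m2 ∧ monDvd m2 m1 ∧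
        ∃ s1 s2, IsLMopt π mo (p.1 : MvPowerSeries (Fin n) O) s1 ∧
          IsLMopt π mo (q.1 : MvPowerSeries (Fin n) O) s2 ∧
          optLE mo (optMul (monDiv m1 m2) s2) s1)

/-- `G` is a strong Gröbner basis of the module `M = SigMod I0 f`. -/
def IsSGB (π : O) (mo : MonomialOrder (Fin n)) (I0 : Ideal (TateAlgebra n O π))
    (f : TateAlgebra n O π) (G : Set (TateAlgebra n O π × TateAlgebra n O π)) : Prop :=
  G.Finite ∧ G ⊆ SigMod I0 f ∧
    ∀ p ∈ SigMod I0 f, p ≠ 0 → ∃ q ∈ G, TopRed π mo p q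

/-- `p` is covered by `q`. -/
def Covers (π : O) (mo : MonomialOrder (Fin n))
    (q p : TateAlgebra n O π × TateAlgebra n O π) : Prop :=
  ∃ mu mq, IsLM π mo (p.1 : MvPowerSeries (Fin n) O) mu ∧
    IsLM π mo (q.1 : MvPowerSeries (Fin n) O) mq ∧ monDvd mq mu ∧
    ∃ sv sp, IsLMopt π mo (q.2 : MvPowerSeries (Fin n) O) sv ∧
      IsLMopt π mo (p.2 : MvPowerSeries (Fin n) O) sp ∧
      optLT mo (optMul (monDiv mu mq) sv) sp

def CoveredBy (π : O) (mo : MonomialOrder (Fin n))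
    (p : TateAlgebra n O π × TateAlgebra n O π)
    (G : Set (TateAlgebra n O π × TateAlgebra n O π)) : Prop :=
  ∃ q ∈ G, Covers π mo q p

/-- The Tate series `π^a X^i`, as an element of the Tate algebra. -/
noncomputable def monTA (π : O) (m : TMon n) : TateAlgebra n O π :=
  ⟨MvPowerSeries.monomial m.2 (π ^ m.1), by
    intro N
    apply Set.Finite.subset (Set.finite_singleton m.2)
    intro i hi
    by_contra h
    rw [Set.mem_singleton_iff] at h
    apply hi
    rw [MvPowerSeries.coeff_monomial, if_neg h]
    exact Dvd.intro 0 (by simp)⟩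

noncomputable def smulPair (π : O) (m : TMon n) (p : TateAlgebra n O π × TateAlgebra n O π) :
    TateAlgebra n O π × TateAlgebra n O π :=
  (monTA π m * p.1, monTA π m * p.2)

/-- `r` is the J-pair of `(p, q)` (with `p` carrying the larger signature part). -/
def IsJPair (π : O) (mo : MonomialOrder (Fin n))
    (p q r : TateAlgebra n O π × TateAlgebra n O π) : Prop :=
  ∃ m1 m2, IsLM π mo (p.2 : MvPowerSeries (Fin n) O) m1 ∧
    IsLM π mo (q.2 : MvPowerSeries (Fin n) O) m2 ∧
    (∃ s1 s2, IsLMopt π mo (p.1 : MvPowerSeries (Fin n) O) s1 ∧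
      IsLMopt π mo (q.1 : MvPowerSeries (Fin n) O) s2 ∧
      optLT mo (optMul (monDiv (monLcm m1 m2) m2) s2)
        (optMul (monDiv (monLcm m1 m2) m1) s1)) ∧
    r = smulPair π (monDiv (monLcm m1 m2) m1) p

section Residue

variable {k : Type*} [Field k]

/-- `P = ρ(f)`, the reduction mod `π` of `π^{-val f} f`. -/
def IsRho (π : O) (φ : O →+* k) (f : MvPowerSeries (Fin n) O)
    (P : MvPolynomial (Fin n) k) : Prop :=
  ∃ (N : ℕ) (g : MvPowerSeries (Fin n) O), f = (π ^ N) • g ∧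
    (∃ i, ¬ π ∣ MvPowerSeries.coeff i g) ∧
    ∀ i, MvPolynomial.coeff i P = φ (MvPowerSeries.coeff i g)

def rhoSet (π : O) (φ : O →+* k) (S : Set (TateAlgebra n O π)) :
    Set (MvPolynomial (Fin n) k) :=
  {P | ∃ f ∈ S, IsRho π φ (f : MvPowerSeries (Fin n) O) P}

/-- `Ī_N`: the image in `k[X]` of `π^{-N} (I ∩ π^N K{X}°)`. -/
def BarIdeal (π : O) (φ : O →+* k) (I : Ideal (TateAlgebra n O π)) (N : ℕ) :
    Set (MvPolynomial (Fin n) k) :=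
  {P | ∃ f ∈ I, ∃ g : MvPowerSeries (Fin n) O, (f : MvPowerSeries (Fin n) O) = (π ^ N) • g ∧
    ∀ i, MvPolynomial.coeff i P = φ (MvPowerSeries.coeff i g)}

/-- `d` is the leading exponent of the polynomial `P` for the monomial order `mo`. -/
def IsPolyLM (mo : MonomialOrder (Fin n)) (P : MvPolynomial (Fin n) k)
    (d : Fin n →₀ ℕ) : Prop :=
  MvPolynomial.coeff d P ≠ 0 ∧ ∀ e, MvPolynomial.coeff e P ≠ 0 → mo.toSyn e ≤ mo.toSyn d

/-- `G` is a Gröbner basis of the set (ideal) `J` of polynomials over the residue field. -/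
def IsPolyGB (mo : MonomialOrder (Fin n)) (G : Set (MvPolynomial (Fin n) k))
    (J : Set (MvPolynomial (Fin n) k)) : Prop :=
  G ⊆ J ∧ ∀ P ∈ J, P ≠ 0 → ∀ d, IsPolyLM mo P d →
    ∃ Q ∈ G, ∃ e, IsPolyLM mo Q e ∧ e ≤ d

end Residue

end TateStmt
namespace TateAux

open TateStmt

variable {n : ℕ} {mo : MonomialOrder (Fin n)}

/-! ### Order facts on Tate monomials -/

lemma termLT_trans {a b c : TMon n} (h1 : termLT mo a b) (h2 : termLT mo b c) :
    termLT mo a c := by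
  rcases h1 with h1 | ⟨h1, h1'⟩ <;> rcases h2 with h2 | ⟨h2, h2'⟩
  · exact Or.inl (h2.trans h1)
  · exact Or.inl (h2 ▸ h1)
  · exact Or.inl (h1 ▸ h2)
  · exact Or.inr ⟨h1.trans h2, h1'.trans h2'⟩

lemma termLT_irrefl (a : TMon n) : ¬ termLT mo a a := by
  rintro (h | ⟨-, h⟩) <;> exact lt_irrefl _ h

lemma termLT_asymm {a b : TMon n} (h : termLT mo a b) : ¬ termLT mo b a :=
  fun h' => termLT_irrefl a (termLT_trans h h')

lemma termLT_trichot (a b : TMon n) : termLT mo a b ∨ a = b ∨ termLT mo b a := by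
  rcases lt_trichotomy a.1 b.1 with h | h | h
  · exact Or.inr (Or.inr (Or.inl h))
  · rcases lt_trichotomy (mo.toSyn a.2) (mo.toSyn b.2) with h' | h' | h'
    · exact Or.inl (Or.inr ⟨h, h'⟩)
    · exact Or.inr (Or.inl (Prod.ext h (mo.toSyn.injective h')))
    · exact Or.inr (Or.inr (Or.inr ⟨h.symm, h'⟩))
  · exact Or.inl (Or.inl h)

lemma termLE_refl (a : TMon n) : termLE mo a a := Or.inl rfl

lemma termLE_of_lt {a b : TMon n} (h : termLT mo a b) : termLE mo a b := Or.inr h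

lemma termLE_antisymm {a b : TMon n} (h1 : termLE mo a b) (h2 : termLE mo b a) : a = b := by
  rcases h1 with h1 | h1
  · exact h1
  rcases h2 with h2 | h2
  · exact h2.symm
  · exact absurd h2 (termLT_asymm h1)

lemma termLT_of_le_of_lt {a b c : TMon n} (h1 : termLE mo a b) (h2 : termLT mo b c) :
    termLT mo a c := by
  rcases h1 with rfl | h1
  · exact h2
  · exact termLT_trans h1 h2

lemma termLT_of_lt_of_le {a b c : TMon n} (h1 : termLT mo a b) (h2 : termLE mo b c) :
    termLT mo a c := by
  rcases h2 with rfl | h2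
  · exact h1
  · exact termLT_trans h1 h2

lemma termLE_trans {a b c : TMon n} (h1 : termLE mo a b) (h2 : termLE mo b c) :
    termLE mo a c := by
  rcases h1 with rfl | h1
  · exact h2
  · exact Or.inr (termLT_of_lt_of_le h1 h2)

/-! ### Monomial arithmetic -/

lemma monMul_comm (a b : TMon n) : monMul a b = monMul b a := by
  simp [monMul, add_comm]

lemma monMul_assoc (a b c : TMon n) : monMul (monMul a b) c = monMul a (monMul b c) := by
  simp [monMul, add_assoc]

lemma monMul_left_cancel {a b c : TMon n} (h : monMul c a = monMul c b) : a = b := by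
  simp only [monMul, Prod.mk.injEq] at h
  exact Prod.ext (by omega) (by simpa using h.2)

lemma termLT_monMul_iff {a b : TMon n} (c : TMon n) :
    termLT mo (monMul a c) (monMul b c) ↔ termLT mo a b := by
  obtain ⟨a1, a2⟩ := a; obtain ⟨b1, b2⟩ := b; obtain ⟨c1, c2⟩ := c
  simp only [termLT, monMul, map_add]
  constructor
  · rintro (h | ⟨h, h'⟩)
    · exact Or.inl (by omega)
    · exact Or.inr ⟨by omega, lt_of_add_lt_add_right h'⟩
  · rintro (h | ⟨h, h'⟩)
    · exact Or.inl (by omega)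
    · exact Or.inr ⟨by omega, add_lt_add_left h' _⟩

lemma termLT_monMul {a b : TMon n} (c : TMon n) (h : termLT mo a b) :
    termLT mo (monMul a c) (monMul b c) := (termLT_monMul_iff c).2 h

lemma termLE_monMul {a b : TMon n} (c : TMon n) (h : termLE mo a b) :
    termLE mo (monMul a c) (monMul b c) := by
  rcases h with rfl | h
  · exact termLE_refl _
  · exact Or.inr (termLT_monMul c h)

lemma monDvd_refl (a : TMon n) : monDvd a a := ⟨le_refl _, le_refl _⟩

lemma monDvd_trans {a b c : TMon n} (h1 : monDvd a b) (h2 : monDvd b c) : monDvd a c :=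
  ⟨h1.1.trans h2.1, h1.2.trans h2.2⟩

lemma monDvd_monMul_self (a b : TMon n) : monDvd a (monMul b a) :=
  ⟨Nat.le_add_left _ _, le_add_self⟩

lemma monDvd_monMul_self' (a b : TMon n) : monDvd a (monMul a b) :=
  ⟨Nat.le_add_right _ _, le_self_add⟩

lemma monDiv_monMul_cancel {a b : TMon n} (h : monDvd b a) : monMul (monDiv a b) b = a := by
  refine Prod.ext (Nat.sub_add_cancel h.1) (tsub_add_cancel_of_le h.2)

lemma monDiv_cancel_monMul (t a : TMon n) : monDiv (monMul t a) a = t := by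
  refine Prod.ext (by simp [monMul, monDiv]) ?_
  simp only [monMul, monDiv]
  exact add_tsub_cancel_right _ _

lemma monDvd_monMul_mono {a b : TMon n} (c : TMon n) (h : monDvd a b) :
    monDvd (monMul a c) (monMul b c) :=
  ⟨by have := h.1; simp only [monMul]; omega,
    by simp only [monMul]; exact add_le_add_left h.2 _⟩

lemma monDvd_lcm_left (a b : TMon n) : monDvd a (monLcm a b) :=
  ⟨le_max_left _ _, le_sup_left⟩

lemma monDvd_lcm_right (a b : TMon n) : monDvd b (monLcm a b) :=
  ⟨le_max_right _ _, le_sup_right⟩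

lemma monLcm_dvd {a b c : TMon n} (h1 : monDvd a c) (h2 : monDvd b c) :
    monDvd (monLcm a b) c := ⟨max_le h1.1 h2.1, sup_le h1.2 h2.2⟩

/-! ### Option-level order facts -/

lemma optLT_none_some (a : TMon n) : optLT mo none (some a) := trivial

lemma optLE_none (s : Option (TMon n)) : optLE mo none s := by
  cases s with
  | none => exact Or.inl rfl
  | some a => exact Or.inr trivial

lemma optLE_some_some {a b : TMon n} (h : termLE mo a b) : optLE mo (some a) (some b) := by
  rcases h with rfl | h
  · exact Or.inl rfl
  · exact Or.inr h

lemma optLE_some_mono {x : Option (TMon n)} {a b : TMon n} (h : optLE mo x (some a))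
    (hab : termLE mo a b) : optLE mo x (some b) := by
  cases x with
  | none => exact optLE_none _
  | some y =>
      rcases h with h | h
      · cases h; exact optLE_some_some hab
      · exact Or.inr (termLT_of_lt_of_le h hab)

lemma optLT_some_of_le_of_lt {x : Option (TMon n)} {a b : TMon n} (h : optLE mo x (some a))
    (hab : termLT mo a b) : optLT mo x (some b) := by
  cases x with
  | none => exact trivial
  | some y =>
      rcases h with h | h
      · cases h; exact hab
      · exact termLT_trans h hab

lemma optLT_some_some_iff {a b : TMon n} : optLT mo (some a) (some b) ↔ termLT mo a b :=
  Iff.rfl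

/-! ### Minimum over a finite set -/

lemma exists_termLT_min {S : Set (TMon n)} (hfin : S.Finite) (hne : S.Nonempty) :
    ∃ a ∈ S, ∀ b ∈ S, ¬ termLT mo b a := by
  classical
  obtain ⟨a, haS, hmin⟩ :=
    Set.exists_min_image S
      (fun a => toLex ((OrderDual.toDual a.1 : ℕᵒᵈ), mo.toSyn a.2)) hfin hne
  refine ⟨a, haS, fun b hbS hlt => ?_⟩
  have hk : toLex ((OrderDual.toDual b.1 : ℕᵒᵈ), mo.toSyn b.2)
      < toLex ((OrderDual.toDual a.1 : ℕᵒᵈ), mo.toSyn a.2) := by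
    rcases hlt with h | ⟨h, h'⟩
    · exact Prod.Lex.left _ _ (by exact h)
    · rw [show (OrderDual.toDual b.1 : ℕᵒᵈ) = OrderDual.toDual a.1 from congrArg _ h]
      exact Prod.Lex.right _ h'
  exact absurd (hmin b hbS) (not_le_of_gt hk)

end TateAux
set_option linter.unusedSectionVars false
set_option linter.unusedVariables false
namespace TateAux

section DVR

variable {O : Type*} [CommRing O] [IsDomain O] [IsDiscreteValuationRing O]
variable {π : O}

lemma pi_prime (hπ : Irreducible π) : Prime π := irreducible_iff_prime.mp hπ

lemma unit_of_not_dvd (hπ : Irreducible π) {c : O} (h : ¬ π ∣ c) : IsUnit c := by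
  by_contra hc
  have hmem : c ∈ IsLocalRing.maximalIdeal O := IsLocalRing.mem_maximalIdeal _ |>.mpr hc
  rw [(IsDiscreteValuationRing.irreducible_iff_uniformizer π).mp hπ, Ideal.mem_span_singleton] at hmem
  exact h hmem

lemma not_dvd_succ_of_exact (hπ : Irreducible π) {c : O} {b : ℕ} (h1 : π ^ b ∣ c)
    (h2 : ¬ π ^ (b + 1) ∣ c) : ∃ γ : O, IsUnit γ ∧ c = π ^ b * γ := by
  obtain ⟨γ, rfl⟩ := h1
  refine ⟨γ, ?_, rfl⟩
  refine unit_of_not_dvd hπ fun ⟨d, hd⟩ => h2 ⟨d, by rw [hd]; ring⟩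

set_option linter.unusedSectionVars false in
lemma exact_val_exists {c : O} (hπ : Irreducible π) (hc : c ≠ 0) :
    ∃ b : ℕ, π ^ b ∣ c ∧ ¬ π ^ (b + 1) ∣ c := by
  obtain ⟨m, u, rfl⟩ := IsDiscreteValuationRing.eq_unit_mul_pow_irreducible hc hπ
  refine ⟨m, ⟨(u : O), mul_comm _ _⟩, fun hdvd => ?_⟩
  have hπ0 : (π : O) ^ m ≠ 0 := pow_ne_zero _ hπ.ne_zero
  obtain ⟨d, hd⟩ := hdvd
  have : (u : O) = π * d := by
    apply mul_left_cancel₀ hπ0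
    calc (π:O)^m * (u:O) = ↑u * π ^ m := mul_comm _ _
      _ = π ^ (m+1) * d := hd
      _ = π^m * (π * d) := by ring
  exact hπ.not_isUnit (isUnit_of_mul_isUnit_left (this ▸ u.isUnit))

lemma dvd_le_of_not_dvd (hπ : Irreducible π) {c : O} {a b : ℕ} (h1 : π ^ a ∣ c)
    (h2 : ¬ π ^ (b + 1) ∣ c) : a ≤ b := by
  by_contra h
  exact h2 ((pow_dvd_pow π (by omega)).trans h1)

lemma exact_val_ne_zero {c : O} {b : ℕ} (h2 : ¬ π ^ (b + 1) ∣ c) : c ≠ 0 :=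
  fun h => h2 (h ▸ dvd_zero _)

lemma exact_val_unique (hπ : Irreducible π) {c : O} {a b : ℕ} (h1 : π ^ a ∣ c)
    (h1' : ¬ π ^ (a + 1) ∣ c) (h2 : π ^ b ∣ c) (h2' : ¬ π ^ (b + 1) ∣ c) : a = b :=
  le_antisymm (dvd_le_of_not_dvd hπ h1 h2') (dvd_le_of_not_dvd hπ h2 h1')

lemma exact_val_mul (hπ : Irreducible π) {c d : O} {a b : ℕ}
    (h1 : π ^ a ∣ c) (h1' : ¬ π ^ (a + 1) ∣ c) (h2 : π ^ b ∣ d) (h2' : ¬ π ^ (b + 1) ∣ d) :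
    π ^ (a + b) ∣ c * d ∧ ¬ π ^ (a + b + 1) ∣ c * d := by
  obtain ⟨γ, hγ, rfl⟩ := not_dvd_succ_of_exact hπ h1 h1'
  obtain ⟨δ, hδ, rfl⟩ := not_dvd_succ_of_exact hπ h2 h2'
  constructor
  · exact ⟨γ * δ, by rw [pow_add]; ring⟩
  · rintro ⟨e, he⟩
    have hne : (π : O) ^ (a + b) ≠ 0 := pow_ne_zero _ hπ.ne_zero
    have : γ * δ = π * e := by
      apply mul_left_cancel₀ hne
      calc (π:O)^(a+b) * (γ * δ) = π ^ a * γ * (π ^ b * δ) := by ring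
        _ = π ^ (a + b + 1) * e := he
        _ = π ^ (a+b) * (π * e) := by ring
    exact ((pi_prime hπ).2.2 γ δ ⟨e, this⟩).elim
      (fun h => hπ.not_isUnit (isUnit_of_dvd_unit h hγ))
      (fun h => hπ.not_isUnit (isUnit_of_dvd_unit h hδ))

lemma exact_val_unit_mul (hπ : Irreducible π) {c ε : O} {a : ℕ} (hu : IsUnit ε)
    (h1 : π ^ a ∣ c) (h1' : ¬ π ^ (a + 1) ∣ c) :
    π ^ a ∣ ε * c ∧ ¬ π ^ (a + 1) ∣ ε * c := by
  refine ⟨h1.mul_left _, fun h => h1' ?_⟩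
  obtain ⟨εi, hεi⟩ := hu.exists_left_inv
  have : c = εi * (ε * c) := by rw [← mul_assoc, hεi, one_mul]
  rw [this]
  exact h.mul_left _

lemma exact_val_pow (hπ : Irreducible π) (k : ℕ) :
    (π : O) ^ k ∣ π ^ k ∧ ¬ π ^ (k + 1) ∣ (π : O) ^ k := by
  refine ⟨dvd_rfl, fun h => ?_⟩
  obtain ⟨d, hd⟩ := h
  have h1 : (π:O)^k * 1 = π^k * (π * d) := by
    rw [mul_one]
    exact hd.trans (by ring)
  have h2 := (mul_left_cancel₀ (pow_ne_zero k hπ.ne_zero) h1).symm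
  exact hπ.not_isUnit (IsUnit.of_mul_eq_one d h2)

lemma exact_val_add (hπ : Irreducible π) {x y : O} {k : ℕ}
    (hx : π ^ k ∣ x) (hx' : ¬ π ^ (k + 1) ∣ x) (hy : π ^ (k + 1) ∣ y) :
    π ^ k ∣ x + y ∧ ¬ π ^ (k + 1) ∣ x + y := by
  refine ⟨dvd_add hx ((pow_dvd_pow _ (Nat.le_succ _)).trans hy), fun h => ?_⟩
  exact hx' (by simpa using dvd_sub h hy)

end DVR

end TateAux
namespace TateAux

section LM

open MvPowerSeries TateStmt

variable {n : ℕ} {O : Type*} [CommRing O] [IsDomain O] [IsDiscreteValuationRing O]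
variable {π : O} {mo : MonomialOrder (Fin n)}
variable {f g : MvPowerSeries (Fin n) O} {m m' : TMon n}

lemma isTerm_coeff_ne_zero (h : IsTerm π f m) : coeff m.2 f ≠ 0 :=
  exact_val_ne_zero h.2

lemma isLM_ne_zero (h : IsLM π mo f m) : f ≠ 0 :=
  fun h0 => isTerm_coeff_ne_zero h.1 (by rw [h0, map_zero])

lemma isLM_unique (h1 : IsLM π mo f m) (h2 : IsLM π mo f m') : m = m' :=
  termLE_antisymm (h2.2 m h1.1) (h1.2 m' h2.1)

lemma isLM_coeff_dvd (hπ : Irreducible π) (h : IsLM π mo f m) (i : Fin n →₀ ℕ) :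
    π ^ m.1 ∣ coeff i f := by
  by_contra hnd
  have hne : coeff i f ≠ 0 := fun h0 => hnd (h0 ▸ dvd_zero _)
  obtain ⟨b, hb, hb'⟩ := exact_val_exists hπ hne
  have hblt : b < m.1 := by
    rcases Nat.lt_or_ge b m.1 with h' | h'
    · exact h'
    · exact absurd ((pow_dvd_pow π h').trans hb) hnd
  rcases h.2 (b, i) ⟨hb, hb'⟩ with heq | hlt
  · exact absurd (congrArg Prod.fst heq) (by simpa using Nat.ne_of_lt hblt)
  · rcases hlt with h' | ⟨h', -⟩ <;> omega

lemma isLM_exp_le (hπ : Irreducible π) (h : IsLM π mo f m) {i : Fin n →₀ ℕ}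
    (hi : ¬ π ^ (m.1 + 1) ∣ coeff i f) : mo.toSyn i ≤ mo.toSyn m.2 := by
  rcases h.2 (m.1, i) ⟨isLM_coeff_dvd hπ h i, hi⟩ with heq | hlt
  · rw [show i = m.2 from congrArg Prod.snd heq]
  · rcases hlt with h' | ⟨-, h'⟩
    · omega
    · exact le_of_lt h'

lemma lm_exists (hπ : Irreducible π) (hT : IsTate π f) (h0 : f ≠ 0) :
    ∃ m, IsLM π mo f m := by
  classical
  have hex : ∃ N, ∃ i, ¬ π ^ N ∣ coeff i f := by
    obtain ⟨i, hi⟩ : ∃ i, coeff i f ≠ 0 := by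
      by_contra hcon
      push_neg at hcon
      exact h0 (MvPowerSeries.ext fun i => by rw [hcon, map_zero])
    obtain ⟨b, -, hb'⟩ := exact_val_exists hπ hi
    exact ⟨b + 1, i, hb'⟩
  have hN0 : ∃ i, ¬ π ^ (Nat.find hex) ∣ coeff i f := Nat.find_spec hex
  have hmin : ∀ M < Nat.find hex, ∀ i, π ^ M ∣ coeff i f := by
    intro M hM i
    by_contra h
    exact (Nat.find_min hex hM) ⟨i, h⟩
  have hpos : 0 < Nat.find hex := by
    rcases Nat.eq_zero_or_pos (Nat.find hex) with h | h
    · obtain ⟨i, hi⟩ := hN0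
      rw [h, pow_zero] at hi
      exact absurd (one_dvd _) hi
    · exact h
  set a := Nat.find hex - 1 with ha
  have hN0a : Nat.find hex = a + 1 := by omega
  have hSfin : {i | ¬ π ^ (a + 1) ∣ coeff i f}.Finite := hT (a + 1)
  have hSne : {i | ¬ π ^ (a + 1) ∣ coeff i f}.Nonempty := by
    obtain ⟨i, hi⟩ := hN0
    exact ⟨i, by rwa [hN0a] at hi⟩
  obtain ⟨e, heS, hemax⟩ := Set.exists_max_image _ (fun i => mo.toSyn i) hSfin hSne
  refine ⟨(a, e), ⟨⟨hmin a (by omega) e, heS⟩, ?_⟩⟩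
  rintro ⟨b, j⟩ ⟨hdvd, hnd⟩
  have hba : a ≤ b := dvd_le_of_not_dvd hπ (hmin a (by omega) j) hnd
  rcases Nat.eq_or_lt_of_le hba with heq | hlt
  · have hj : j ∈ {i | ¬ π ^ (a + 1) ∣ coeff i f} := by
      rw [heq]; exact hnd
    by_cases hje : j = e
    · exact Or.inl (Prod.ext heq.symm hje)
    · exact Or.inr (Or.inr ⟨heq.symm,
        lt_of_le_of_ne (hemax j hj) (fun hh => hje (mo.toSyn.injective hh))⟩)
  · exact Or.inr (Or.inl hlt)

lemma isTerm_neg_iff : IsTerm π (-f) m ↔ IsTerm π f m := by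
  simp only [IsTerm, map_neg, dvd_neg]

lemma isLM_neg (h : IsLM π mo f m) : IsLM π mo (-f) m :=
  ⟨isTerm_neg_iff.2 h.1, fun m'' hm'' => h.2 m'' (isTerm_neg_iff.1 hm'')⟩

lemma isLM_neg_iff : IsLM π mo (-f) m ↔ IsLM π mo f m :=
  ⟨fun h => by simpa using isLM_neg h, isLM_neg⟩

lemma isLM_add_lt (hπ : Irreducible π) (hf : IsLM π mo f m) (hg : IsLM π mo g m')
    (hlt : termLT mo m' m) : IsLM π mo (f + g) m := by
  have hgdvd : ∀ i, π ^ m.1 ∣ coeff i g := by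
    intro i
    rcases hlt with h' | ⟨h', -⟩
    · exact (pow_dvd_pow π (le_of_lt h')).trans (isLM_coeff_dvd hπ hg i)
    · exact h' ▸ isLM_coeff_dvd hπ hg i
  have hg2 : π ^ (m.1 + 1) ∣ coeff m.2 g := by
    rcases hlt with h' | ⟨h', hsyn⟩
    · exact (pow_dvd_pow π (by omega)).trans (isLM_coeff_dvd hπ hg m.2)
    · by_contra hcon
      rw [← h'] at hcon
      exact absurd (isLM_exp_le hπ hg hcon) (not_le_of_gt hsyn)
  constructor
  · have hres := exact_val_add hπ hf.1.1 hf.1.2 hg2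
    exact ⟨by rw [map_add]; exact hres.1, by rw [map_add]; exact hres.2⟩
  · rintro ⟨b, j⟩ ⟨hdvd, hnd⟩
    rw [show (coeff j) (f + g) = coeff j f + coeff j g from map_add _ _ _] at hnd
    have hb : m.1 ≤ b := by
      refine dvd_le_of_not_dvd hπ ?_ hnd
      exact dvd_add (isLM_coeff_dvd hπ hf j) (hgdvd j)
    rcases Nat.eq_or_lt_of_le hb with heq | hltb
    · have hsynle : mo.toSyn j ≤ mo.toSyn m.2 := by
        by_cases h1 : π ^ (m.1 + 1) ∣ coeff j f
        · have h2 : ¬ π ^ (m.1 + 1) ∣ coeff j g := by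
            intro h2
            rw [← heq] at hnd
            exact hnd (dvd_add h1 h2)
          rcases hlt with h' | ⟨h', hsyn⟩
          · exact absurd ((pow_dvd_pow π (by omega)).trans (isLM_coeff_dvd hπ hg j)) h2
          · exact le_of_lt (lt_of_le_of_lt (isLM_exp_le hπ hg (h' ▸ h2)) hsyn)
        · exact isLM_exp_le hπ hf h1
      by_cases hje : j = m.2
      · exact Or.inl (Prod.ext heq.symm hje)
      · exact Or.inr (Or.inr ⟨heq.symm,
          lt_of_le_of_ne hsynle (fun hh => hje (mo.toSyn.injective hh))⟩)
    · exact Or.inr (Or.inl hltb)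

lemma isLM_sub_lt (hπ : Irreducible π) (hf : IsLM π mo f m) (hg : IsLM π mo g m)
    (hc : coeff m.2 f = coeff m.2 g) {m'' : TMon n} (h'' : IsLM π mo (f - g) m'') :
    termLT mo m'' m := by
  obtain ⟨hdvd'', hnd''⟩ := h''.1
  rw [show (coeff m''.2) (f - g) = coeff m''.2 f - coeff m''.2 g from map_sub _ _ _]
    at hnd''
  have hball : ∀ i, π ^ m.1 ∣ coeff i f - coeff i g := fun i =>
    dvd_sub (isLM_coeff_dvd hπ hf i) (isLM_coeff_dvd hπ hg i)
  have hb : m.1 ≤ m''.1 := dvd_le_of_not_dvd hπ (hball m''.2) hnd''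
  rcases Nat.eq_or_lt_of_le hb with heq | hltb
  · have hje : m''.2 ≠ m.2 := by
      intro hje
      rw [hje, hc] at hnd''
      exact hnd'' (by simp)
    have hsynle : mo.toSyn m''.2 ≤ mo.toSyn m.2 := by
      by_cases h1 : π ^ (m.1 + 1) ∣ coeff m''.2 f
      · have h2 : ¬ π ^ (m.1 + 1) ∣ coeff m''.2 g := by
          intro h2
          rw [← heq] at hnd''
          exact hnd'' (dvd_sub h1 h2)
        exact isLM_exp_le hπ hg h2
      · exact isLM_exp_le hπ hf h1
    exact Or.inr ⟨heq.symm, lt_of_le_of_ne hsynle (fun hh => hje (mo.toSyn.injective hh))⟩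
  · exact Or.inl hltb

lemma isLM_one (hπ : Irreducible π) : IsLM π mo (1 : MvPowerSeries (Fin n) O) ((0, 0) : TMon n) := by
  constructor
  · constructor
    · simp [MvPowerSeries.coeff_one]
    · simp only [MvPowerSeries.coeff_one, if_pos rfl]
      intro h
      exact hπ.not_isUnit (isUnit_of_dvd_one (by simpa using h))
  · rintro ⟨b, j⟩ ⟨hdvd, hnd⟩
    rw [MvPowerSeries.coeff_one] at hdvd hnd
    by_cases hj : j = 0
    · rw [if_pos hj] at hdvd hnd
      have hb : b = 0 := by
        by_contra hb0
        exact hπ.not_isUnit (isUnit_of_dvd_one ((dvd_pow_self π hb0).trans hdvd))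
      exact Or.inl (Prod.ext hb hj)
    · rw [if_neg hj] at hnd
      exact absurd (dvd_zero _) hnd

lemma syn_add_cancel {a b c d : mo.syn} (h1 : a ≤ c) (h2 : b ≤ d) (h : a + b = c + d) :
    a = c ∧ b = d := by
  have hbd : b = d := by
    have h3 : c + d ≤ c + b := by
      rw [← h]; exact add_le_add_left h1 b
    exact le_antisymm h2 (le_of_add_le_add_left h3)
  refine ⟨?_, hbd⟩
  rw [hbd] at h
  exact add_right_cancel h

lemma isLM_mul (hπ : Irreducible π) (hf : IsLM π mo f m) (hg : IsLM π mo g m') :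
    IsLM π mo (f * g) (monMul m m') := by
  classical
  have hdvd_all : ∀ j, π ^ (m.1 + m'.1) ∣ coeff j (f * g) := by
    intro j
    rw [MvPowerSeries.coeff_mul]
    refine Finset.dvd_sum fun p _ => ?_
    rw [pow_add]
    exact mul_dvd_mul (isLM_coeff_dvd hπ hf p.1) (isLM_coeff_dvd hπ hg p.2)
  have hpair : ∀ p : (Fin n →₀ ℕ) × (Fin n →₀ ℕ),
      ¬ π ^ (m.1 + m'.1 + 1) ∣ coeff p.1 f * coeff p.2 g →
      mo.toSyn p.1 ≤ mo.toSyn m.2 ∧ mo.toSyn p.2 ≤ mo.toSyn m'.2 := by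
    intro p hp
    have h1 : ¬ π ^ (m.1 + 1) ∣ coeff p.1 f := by
      intro h1
      refine hp ?_
      rw [show m.1 + m'.1 + 1 = (m.1 + 1) + m'.1 by omega, pow_add]
      exact mul_dvd_mul h1 (isLM_coeff_dvd hπ hg p.2)
    have h2 : ¬ π ^ (m'.1 + 1) ∣ coeff p.2 g := by
      intro h2
      refine hp ?_
      rw [show m.1 + m'.1 + 1 = m.1 + (m'.1 + 1) by omega, pow_add]
      exact mul_dvd_mul (isLM_coeff_dvd hπ hf p.1) h2
    exact ⟨isLM_exp_le hπ hf h1, isLM_exp_le hπ hg h2⟩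
  constructor
  · have hmem : ((m.2, m'.2) : (Fin n →₀ ℕ) × (Fin n →₀ ℕ))
        ∈ Finset.HasAntidiagonal.antidiagonal (m.2 + m'.2) := by
      rw [Finset.HasAntidiagonal.mem_antidiagonal]
    have hcoeff : coeff (m.2 + m'.2) (f * g) =
        coeff m.2 f * coeff m'.2 g +
          ∑ p ∈ (Finset.HasAntidiagonal.antidiagonal (m.2 + m'.2)).erase (m.2, m'.2),
            coeff p.1 f * coeff p.2 g := by
      rw [MvPowerSeries.coeff_mul]
      exact (Finset.add_sum_erase _ _ hmem).symm
    have hmain := exact_val_mul hπ hf.1.1 hf.1.2 hg.1.1 hg.1.2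
    have hrest : π ^ (m.1 + m'.1 + 1) ∣
        ∑ p ∈ (Finset.HasAntidiagonal.antidiagonal (m.2 + m'.2)).erase (m.2, m'.2),
          coeff p.1 f * coeff p.2 g := by
      refine Finset.dvd_sum fun p hp => ?_
      obtain ⟨hpne, hpmem⟩ := Finset.mem_erase.mp hp
      by_contra hnd
      obtain ⟨e1, e2⟩ := hpair p hnd
      have hsum : mo.toSyn p.1 + mo.toSyn p.2 = mo.toSyn m.2 + mo.toSyn m'.2 := by
        rw [← map_add, ← map_add, Finset.HasAntidiagonal.mem_antidiagonal.mp hpmem]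
      obtain ⟨q1, q2⟩ := syn_add_cancel e1 e2 hsum
      exact hpne (Prod.ext (mo.toSyn.injective q1) (mo.toSyn.injective q2))
    have hfinal := exact_val_add hπ hmain.1 hmain.2 hrest
    constructor
    · show π ^ (m.1 + m'.1) ∣ coeff (m.2 + m'.2) (f * g)
      rw [hcoeff]; exact hfinal.1
    · show ¬ π ^ (m.1 + m'.1 + 1) ∣ coeff (m.2 + m'.2) (f * g)
      rw [hcoeff]; exact hfinal.2
  · rintro ⟨b, j⟩ ⟨hdvd, hnd⟩
    have hb : m.1 + m'.1 ≤ b := dvd_le_of_not_dvd hπ (hdvd_all j) hnd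
    rcases Nat.eq_or_lt_of_le hb with heq | hltb
    · have hex : ∃ p ∈ Finset.HasAntidiagonal.antidiagonal j,
          ¬ π ^ (m.1 + m'.1 + 1) ∣ coeff p.1 f * coeff p.2 g := by
        by_contra hcon
        push_neg at hcon
        rw [MvPowerSeries.coeff_mul] at hnd
        exact hnd (heq ▸ Finset.dvd_sum hcon)
      obtain ⟨p, hpmem, hpnd⟩ := hex
      obtain ⟨e1, e2⟩ := hpair p hpnd
      have hsynle : mo.toSyn j ≤ mo.toSyn (m.2 + m'.2) := by
        rw [← Finset.HasAntidiagonal.mem_antidiagonal.mp hpmem, map_add, map_add]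
        exact add_le_add e1 e2
      by_cases hje : j = m.2 + m'.2
      · exact Or.inl (Prod.ext heq.symm hje)
      · exact Or.inr (Or.inr ⟨heq.symm,
          lt_of_le_of_ne hsynle (fun hh => hje (mo.toSyn.injective hh))⟩)
    · exact Or.inr (Or.inl hltb)

lemma isLM_monomul (hπ : Irreducible π) {c : O} (t : TMon n)
    (hdvd : π ^ t.1 ∣ c) (hnd : ¬ π ^ (t.1 + 1) ∣ c) (hg : IsLM π mo g m) :
    IsLM π mo ((monomial t.2 c) * g) (monMul t m) := by
  have hcoeff : ∀ j, coeff j ((monomial t.2 c) * g) =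
      if t.2 ≤ j then c * coeff (j - t.2) g else 0 := fun j => by
    rw [MvPowerSeries.coeff_monomial_mul]
  constructor
  · have e1 : coeff (t.2 + m.2) ((monomial t.2 c) * g) = c * coeff m.2 g := by
      rw [hcoeff, if_pos le_self_add, add_tsub_cancel_left]
    have hres := exact_val_mul hπ hdvd hnd hg.1.1 hg.1.2
    constructor
    · show π ^ (t.1 + m.1) ∣ coeff (t.2 + m.2) ((monomial t.2 c) * g)
      rw [e1]; exact hres.1
    · show ¬ π ^ (t.1 + m.1 + 1) ∣ coeff (t.2 + m.2) ((monomial t.2 c) * g)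
      rw [e1]; exact hres.2
  · rintro ⟨b, j⟩ ⟨hdvdb, hndb⟩
    rw [hcoeff] at hdvdb hndb
    by_cases hj : t.2 ≤ j
    · rw [if_pos hj] at hdvdb hndb
      have hdvd_all : π ^ (t.1 + m.1) ∣ c * coeff (j - t.2) g := by
        rw [pow_add]
        exact mul_dvd_mul hdvd (isLM_coeff_dvd hπ hg _)
      have hb : t.1 + m.1 ≤ b := dvd_le_of_not_dvd hπ hdvd_all hndb
      rcases Nat.eq_or_lt_of_le hb with heq | hltb
      · have h1 : ¬ π ^ (m.1 + 1) ∣ coeff (j - t.2) g := by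
          intro h1
          have hstep : π ^ (t.1 + m.1 + 1) ∣ c * coeff (j - t.2) g := by
            rw [show t.1 + m.1 + 1 = t.1 + (m.1 + 1) by omega, pow_add]
            exact mul_dvd_mul hdvd h1
          exact hndb (heq ▸ hstep)
        have hsynle : mo.toSyn j ≤ mo.toSyn (t.2 + m.2) := by
          have hjj : (j - t.2) + t.2 = j := tsub_add_cancel_of_le hj
          calc mo.toSyn j = mo.toSyn (j - t.2) + mo.toSyn t.2 := by rw [← map_add, hjj]
            _ ≤ mo.toSyn m.2 + mo.toSyn t.2 := add_le_add_left (isLM_exp_le hπ hg h1) _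
            _ = mo.toSyn (t.2 + m.2) := by rw [← map_add, add_comm]
        by_cases hje : j = t.2 + m.2
        · exact Or.inl (Prod.ext heq.symm hje)
        · exact Or.inr (Or.inr ⟨heq.symm,
            lt_of_le_of_ne hsynle (fun hh => hje (mo.toSyn.injective hh))⟩)
      · exact Or.inr (Or.inl hltb)
    · rw [if_neg hj] at hndb
      exact absurd (dvd_zero _) hndb

end LM

end TateAux
namespace TateAux

section TAutil

open MvPowerSeries TateStmt

variable {n : ℕ} {O : Type*} [CommRing O] [IsDomain O] [IsDiscreteValuationRing O]
variable {π : O} {mo : MonomialOrder (Fin n)}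

/-- Constant series as an element of the Tate algebra. -/
noncomputable def constTA (π : O) (c : O) : TateAlgebra n O π :=
  ⟨MvPowerSeries.C c, by
    intro N
    apply Set.Finite.subset (Set.finite_singleton (0 : Fin n →₀ ℕ))
    intro i hi
    by_contra h
    rw [Set.mem_singleton_iff] at h
    apply hi
    rw [MvPowerSeries.coeff_C, if_neg h]
    exact dvd_zero _⟩

lemma coe_constTA (c : O) : ((constTA π c : TateAlgebra n O π) : MvPowerSeries (Fin n) O)
    = MvPowerSeries.C c := rfl

lemma coe_monTA (t : TMon n) : ((monTA π t : TateAlgebra n O π) : MvPowerSeries (Fin n) O)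
    = monomial t.2 (π ^ t.1) := rfl

lemma coeTA_mul (x y : TateAlgebra n O π) :
    ((x * y : TateAlgebra n O π) : MvPowerSeries (Fin n) O) = (x : MvPowerSeries (Fin n) O) * y := rfl

lemma coeTA_sub (x y : TateAlgebra n O π) :
    ((x - y : TateAlgebra n O π) : MvPowerSeries (Fin n) O) = (x : MvPowerSeries (Fin n) O) - y := rfl

lemma coeTA_zero : (((0 : TateAlgebra n O π)) : MvPowerSeries (Fin n) O) = 0 := rfl

lemma coeTA_one : (((1 : TateAlgebra n O π)) : MvPowerSeries (Fin n) O) = 1 := rfl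

lemma coeTA_eq_zero {x : TateAlgebra n O π} (h : (x : MvPowerSeries (Fin n) O) = 0) : x = 0 :=
  Subtype.ext h

lemma mem_sigMod {I0 : Ideal (TateAlgebra n O π)} {f : TateAlgebra n O π}
    {p : TateAlgebra n O π × TateAlgebra n O π} :
    p ∈ SigMod I0 f ↔ p.1 * f - p.2 ∈ I0 := Iff.rfl

lemma sigMod_sub_mul {I0 : Ideal (TateAlgebra n O π)} {f : TateAlgebra n O π}
    {p q : TateAlgebra n O π × TateAlgebra n O π} (hp : p ∈ SigMod I0 f)
    (hq : q ∈ SigMod I0 f) (h : TateAlgebra n O π) :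
    (p.1 - h * q.1, p.2 - h * q.2) ∈ SigMod I0 f := by
  rw [mem_sigMod] at *
  have heq : (p.1 - h * q.1) * f - (p.2 - h * q.2)
      = (p.1 * f - p.2) - h * (q.1 * f - q.2) := by ring
  rw [heq]
  exact sub_mem hp (Ideal.mul_mem_left _ _ hq)

/-- The existence of an exact-match reducer monomial. -/
lemma exists_reducer (hπ : Irreducible π) {u w : MvPowerSeries (Fin n) O} {Tu mU : TMon n}
    (hu : IsLM π mo u Tu) (hw : IsLM π mo w mU) (hdvd : monDvd mU Tu) :
    ∃ c : O, (π ^ (monDiv Tu mU).1 ∣ c * π ^ (monDiv Tu mU).1 ∧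
        ¬ π ^ ((monDiv Tu mU).1 + 1) ∣ c * π ^ (monDiv Tu mU).1) ∧
      IsLM π mo ((monomial (monDiv Tu mU).2 (c * π ^ (monDiv Tu mU).1)) * w) Tu ∧
      coeff Tu.2 ((monomial (monDiv Tu mU).2 (c * π ^ (monDiv Tu mU).1)) * w)
        = coeff Tu.2 u := by
  set t := monDiv Tu mU with htdef
  have htm : monMul t mU = Tu := monDiv_monMul_cancel hdvd
  obtain ⟨γ, hγu, hγeq⟩ := not_dvd_succ_of_exact hπ hu.1.1 hu.1.2
  obtain ⟨δ, hδu, hδeq⟩ := not_dvd_succ_of_exact hπ hw.1.1 hw.1.2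
  obtain ⟨δ', hδ'⟩ := hδu.exists_right_inv
  have hcu : IsUnit (γ * δ') :=
    hγu.mul (IsUnit.of_mul_eq_one (a := δ') δ (by rw [mul_comm]; exact hδ'))
  have hexact := exact_val_unit_mul hπ hcu (exact_val_pow hπ t.1).1 (exact_val_pow hπ t.1).2
  refine ⟨γ * δ', hexact, ?_, ?_⟩
  · have hLM := isLM_monomul hπ t hexact.1 hexact.2 hw
    rw [htm] at hLM
    exact hLM
  · have ht2le : t.2 ≤ Tu.2 := tsub_le_self
    have hsub : Tu.2 - t.2 = mU.2 := tsub_tsub_cancel_of_le hdvd.2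
    have h1 : t.1 + mU.1 = Tu.1 := congrArg Prod.fst htm
    rw [MvPowerSeries.coeff_monomial_mul, if_pos ht2le, hsub, hδeq, hγeq]
    calc γ * δ' * π ^ t.1 * (π ^ mU.1 * δ)
        = (δ * δ') * (γ * (π ^ t.1 * π ^ mU.1)) := by ring
      _ = γ * π ^ (t.1 + mU.1) := by rw [hδ', ← pow_add, one_mul]
      _ = π ^ Tu.1 * γ := by rw [h1]; ring

lemma coe_constTA_monTA (c : O) (t : TMon n) :
    ((constTA π c * monTA π t : TateAlgebra n O π) : MvPowerSeries (Fin n) O)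
      = monomial t.2 (c * π ^ t.1) := by
  rw [coeTA_mul, coe_constTA, coe_monTA, ← MvPowerSeries.monomial_zero_eq_C_apply,
    MvPowerSeries.monomial_mul_monomial, zero_add]

lemma neTA {x : TateAlgebra n O π} (h : (x : MvPowerSeries (Fin n) O) ≠ 0) : x ≠ 0 :=
  fun hx => h (by rw [hx]; rfl)

lemma isLMopt_some_unique {x : MvPowerSeries (Fin n) O} {s : Option (TMon n)} {m : TMon n}
    (hs : IsLMopt π mo x s) (hm : IsLM π mo x m) : s = some m := by
  cases s with
  | none => exact absurd hs (isLM_ne_zero hm)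
  | some m' => exact congrArg some (isLM_unique hs hm)

end TAutil

section Identities

variable {n : ℕ} {mo : MonomialOrder (Fin n)}

open TateStmt

lemma monDiv_dvd {L b t : TMon n} (h : monDvd L (monMul t b)) : monDvd (monDiv L b) t := by
  constructor
  · have := h.1
    simp only [monMul, monDiv] at *
    omega
  · exact tsub_le_iff_right.mpr (by simpa [monMul] using h.2)

lemma key_identity {t mV mV' L : TMon n} (h1 : monDvd mV L) (h2 : monDvd mV' L)
    (h3 : monDvd L (monMul t mV)) :
    monDiv (monMul t mV) mV' = monMul (monDiv t (monDiv L mV)) (monDiv L mV') := by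
  obtain ⟨h11, h12⟩ := h1; obtain ⟨h21, h22⟩ := h2; obtain ⟨h31, h32⟩ := h3
  simp only [monMul, monDiv] at *
  refine Prod.ext (by omega) ?_
  ext x
  have e1 := Finsupp.le_def.mp h12 x
  have e2 := Finsupp.le_def.mp h22 x
  have e3 := Finsupp.le_def.mp h32 x
  simp only [Finsupp.add_apply] at e3
  simp only [Finsupp.add_apply, Finsupp.tsub_apply]
  omega

lemma key_identity2 {t t1 mU m : TMon n} (h1 : monDvd t1 t) (h2 : monDvd m (monMul t1 mU)) :
    monDiv (monMul t mU) m = monMul (monDiv t t1) (monDiv (monMul t1 mU) m) := by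
  obtain ⟨h11, h12⟩ := h1; obtain ⟨h21, h22⟩ := h2
  simp only [monMul, monDiv] at *
  refine Prod.ext (by omega) ?_
  ext x
  have e1 := Finsupp.le_def.mp h12 x
  have e2 := Finsupp.le_def.mp h22 x
  simp only [Finsupp.add_apply] at e2
  simp only [Finsupp.add_apply, Finsupp.tsub_apply]
  omega

lemma termLT_monMul_left_iff {a b : TMon n} (c : TMon n) :
    termLT mo (monMul c a) (monMul c b) ↔ termLT mo a b := by
  rw [monMul_comm c a, monMul_comm c b]
  exact termLT_monMul_iff c

end Identities

end TateAux
namespace TateAux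

section Crux

open MvPowerSeries TateStmt

variable {n : ℕ} {O : Type*} [CommRing O] [IsDomain O] [IsDiscreteValuationRing O]
variable {π : O} {mo : MonomialOrder (Fin n)}
variable {G : Set (TateAlgebra n O π × TateAlgebra n O π)}

/-- The crucial J-pair/covering argument: if `q ∈ G` realizes the minimal ratio at
signature level `T` (and no syzygy of `G` divides `T`), then no `q' ∈ G` can reduce the
leading monomial `W = (T / LM u_q) * LM v_q` with signature budget strictly below `T`. -/
lemma crux (hπ : Irreducible π)
    (hcov : ∀ p ∈ G, ∀ q ∈ G, ∀ r, IsJPair π mo p q r → CoveredBy π mo r G)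
    {q : TateAlgebra n O π × TateAlgebra n O π} (hqG : q ∈ G)
    {mU mV : TMon n} (hU : IsLM π mo (q.1 : MvPowerSeries (Fin n) O) mU)
    (hV : IsLM π mo (q.2 : MvPowerSeries (Fin n) O) mV)
    {T : TMon n} (hdvd : monDvd mU T)
    (MIN : ∀ q'' ∈ G, ∀ mU'' mV'', IsLM π mo (q''.1 : MvPowerSeries (Fin n) O) mU'' →
        IsLM π mo (q''.2 : MvPowerSeries (Fin n) O) mV'' → monDvd mU'' T →
        ¬ termLT mo (monMul (monDiv T mU'') mV'') (monMul (monDiv T mU) mV))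
    (NOSYZ : ∀ q'' ∈ G, (q''.2 : MvPowerSeries (Fin n) O) = 0 →
        ∀ mU'', IsLM π mo (q''.1 : MvPowerSeries (Fin n) O) mU'' → ¬ monDvd mU'' T)
    {q' : TateAlgebra n O π × TateAlgebra n O π} (hq'G : q' ∈ G)
    {mV' : TMon n} (hV' : IsLM π mo (q'.2 : MvPowerSeries (Fin n) O) mV')
    (hdvdW : monDvd mV' (monMul (monDiv T mU) mV))
    {s2 : Option (TMon n)} (hs2 : IsLMopt π mo (q'.1 : MvPowerSeries (Fin n) O) s2)
    (hstrict : optLT mo (optMul (monDiv (monMul (monDiv T mU) mV) mV') s2) (some T)) :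
    False := by
  set t := monDiv T mU with htdef
  have htm : monMul t mU = T := monDiv_monMul_cancel hdvd
  set L := monLcm mV mV' with hLdef
  have hVW : monDvd mV (monMul t mV) := monDvd_monMul_self _ _
  have hLW : monDvd L (monMul t mV) := monLcm_dvd hVW hdvdW
  set t1 := monDiv L mV with ht1def
  set t2 := monDiv L mV' with ht2def
  have ht1t : monDvd t1 t := monDiv_dvd hLW
  have hkey : monDiv (monMul t mV) mV'
      = monMul (monDiv t t1) t2 :=
    key_identity (monDvd_lcm_left _ _) (monDvd_lcm_right _ _) hLW
  have hTsplit : monMul (monDiv t t1) (monMul t1 mU) = monMul t mU := by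
    rw [← monMul_assoc, monDiv_monMul_cancel ht1t]
  -- the J-pair of (q, q')
  have hjp : IsJPair π mo q q' (smulPair π t1 q) := by
    refine ⟨mV, mV', hV, hV', ⟨some mU, s2, hU, hs2, ?_⟩, rfl⟩
    cases s2 with
    | none => exact trivial
    | some mS =>
        have hstrict' : termLT mo (monMul (monDiv (monMul t mV) mV') mS) T := hstrict
        rw [hkey, monMul_assoc, ← htm, ← hTsplit] at hstrict'
        exact (termLT_monMul_left_iff (monDiv t t1)).mp hstrict'
  obtain ⟨q'', hq''G, hcovers⟩ := hcov q hqG q' hq'G _ hjp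
  obtain ⟨mu, mq'', hLMr1, hU'', hdvd'', sv, sp, hsv, hsp, hcovlt⟩ := hcovers
  have hr1 : IsLM π mo ((smulPair π t1 q).1 : MvPowerSeries (Fin n) O) (monMul t1 mU) := by
    have hcoe : ((smulPair π t1 q).1 : MvPowerSeries (Fin n) O)
        = (monomial t1.2 (π ^ t1.1)) * (q.1 : MvPowerSeries (Fin n) O) := rfl
    rw [hcoe]
    exact isLM_monomul hπ t1 (exact_val_pow hπ t1.1).1 (exact_val_pow hπ t1.1).2 hU
  have hr2 : IsLM π mo ((smulPair π t1 q).2 : MvPowerSeries (Fin n) O) (monMul t1 mV) := by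
    have hcoe : ((smulPair π t1 q).2 : MvPowerSeries (Fin n) O)
        = (monomial t1.2 (π ^ t1.1)) * (q.2 : MvPowerSeries (Fin n) O) := rfl
    rw [hcoe]
    exact isLM_monomul hπ t1 (exact_val_pow hπ t1.1).1 (exact_val_pow hπ t1.1).2 hV
  have hmu : mu = monMul t1 mU := isLM_unique hLMr1 hr1
  have hspv : sp = some (monMul t1 mV) := isLMopt_some_unique hsp hr2
  rw [hmu] at hdvd'' hcovlt
  rw [hspv] at hcovlt
  have hdvdT'' : monDvd mq'' T := by
    rw [← htm]
    exact monDvd_trans hdvd'' (monDvd_monMul_mono mU ht1t)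
  cases sv with
  | none =>
      exact NOSYZ q'' hq''G hsv mq'' hU'' hdvdT''
  | some mV'' =>
      refine MIN q'' hq''G mq'' mV'' hU'' hsv hdvdT'' ?_
      have hcovlt' : termLT mo (monMul (monDiv (monMul t1 mU) mq'') mV'') (monMul t1 mV) :=
        hcovlt
      have hkey2 : monDiv T mq''
          = monMul (monDiv t t1) (monDiv (monMul t1 mU) mq'') := by
        rw [← htm]
        exact key_identity2 ht1t hdvd''
      rw [hkey2, monMul_assoc]
      have hW : monMul t mV = monMul (monDiv t t1) (monMul t1 mV) := by
        rw [← monMul_assoc, monDiv_monMul_cancel ht1t]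
      show termLT mo _ (monMul t mV)
      rw [hW]
      exact (termLT_monMul_left_iff (monDiv t t1)).mpr hcovlt'

end Crux

end TateAux
namespace TateAux

section Main

open MvPowerSeries TateStmt

variable {n : ℕ} {O : Type*} [CommRing O] [IsDomain O] [IsDiscreteValuationRing O]
variable {π : O} {mo : MonomialOrder (Fin n)}

/-- Number of elements of `G` whose (virtual) ratio exceeds the current level `Wv / Tu`. -/
noncomputable def nRho (π : O) (mo : MonomialOrder (Fin n))
    (G : Set (TateAlgebra n O π × TateAlgebra n O π)) (Tu Wv : TMon n) : ℕ :=
  {q : TateAlgebra n O π × TateAlgebra n O π | q ∈ G ∧ ∃ mU mV,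
    IsLM π mo (q.1 : MvPowerSeries (Fin n) O) mU ∧
    IsLM π mo (q.2 : MvPowerSeries (Fin n) O) mV ∧
    termLT mo (monMul Wv mU) (monMul Tu mV)}.ncard

variable {I0 : Ideal (TateAlgebra n O π)} {f : TateAlgebra n O π}
variable {G : Set (TateAlgebra n O π × TateAlgebra n O π)}

lemma nRho_mono (hfin : G.Finite) {Tu Tu' Wv Wv' : TMon n}
    (h : ∀ mU mV : TMon n, termLT mo (monMul Wv' mU) (monMul Tu' mV) →
        termLT mo (monMul Wv mU) (monMul Tu mV)) :
    nRho π mo G Tu' Wv' ≤ nRho π mo G Tu Wv := by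
  apply Set.ncard_le_ncard
  · rintro q ⟨hqG, mU, mV, h1, h2, h3⟩
    exact ⟨hqG, mU, mV, h1, h2, h mU mV h3⟩
  · exact hfin.subset (fun q hq => hq.1)

lemma measure_lt_sig (hfin : G.Finite) {Tu Tu' Wv : TMon n} (hlt : termLT mo Tu' Tu)
    (hbound : Tu.1 ≤ Wv.1) :
    Prod.Lex (· < ·) (Prod.Lex (· < ·) (· < ·))
      ((nRho π mo G Tu' Wv, (Wv.1 + 1 - Tu'.1, mo.toSyn Tu'.2)) : ℕ × ℕ × mo.syn)
      (nRho π mo G Tu Wv, (Wv.1 + 1 - Tu.1, mo.toSyn Tu.2)) := by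
  have hle : nRho π mo G Tu' Wv ≤ nRho π mo G Tu Wv :=
    nRho_mono hfin (fun mU mV h3 =>
      termLT_trans h3 ((termLT_monMul_iff mV).mpr hlt))
  rcases lt_or_eq_of_le hle with h | h
  · exact Prod.Lex.left _ _ h
  · rw [h]
    apply Prod.Lex.right
    rcases hlt with hval | ⟨hval, hexp⟩
    · exact Prod.Lex.left _ _ (by omega)
    · rw [show Wv.1 + 1 - Tu'.1 = Wv.1 + 1 - Tu.1 by omega]
      exact Prod.Lex.right _ hexp

lemma measure_lt_B2 (hfin : G.Finite) {Tu Tu' Wv W' : TMon n}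
    {qs : TateAlgebra n O π × TateAlgebra n O π} (hqsG : qs ∈ G) {mUs mVs : TMon n}
    (hUs : IsLM π mo (qs.1 : MvPowerSeries (Fin n) O) mUs)
    (hVs : IsLM π mo (qs.2 : MvPowerSeries (Fin n) O) mVs)
    (hWU : monMul W' mUs = monMul Tu mVs)
    (hWlt : termLT mo Wv W') (hTult : termLT mo Tu' Tu) :
    Prod.Lex (· < ·) (Prod.Lex (· < ·) (· < ·))
      ((nRho π mo G Tu' W', (W'.1 + 1 - Tu'.1, mo.toSyn Tu'.2)) : ℕ × ℕ × mo.syn)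
      (nRho π mo G Tu Wv, (Wv.1 + 1 - Tu.1, mo.toSyn Tu.2)) := by
  apply Prod.Lex.left
  set Snew := {q : TateAlgebra n O π × TateAlgebra n O π | q ∈ G ∧ ∃ mU mV,
    IsLM π mo (q.1 : MvPowerSeries (Fin n) O) mU ∧
    IsLM π mo (q.2 : MvPowerSeries (Fin n) O) mV ∧
    termLT mo (monMul W' mU) (monMul Tu' mV)} with hSnew
  set Sold := {q : TateAlgebra n O π × TateAlgebra n O π | q ∈ G ∧ ∃ mU mV,
    IsLM π mo (q.1 : MvPowerSeries (Fin n) O) mU ∧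
    IsLM π mo (q.2 : MvPowerSeries (Fin n) O) mV ∧
    termLT mo (monMul Wv mU) (monMul Tu mV)} with hSold
  have hsub : Snew ⊆ Sold := by
    rintro q ⟨hqG, mU, mV, h1, h2, h3⟩
    refine ⟨hqG, mU, mV, h1, h2, ?_⟩
    exact termLT_trans ((termLT_monMul_iff mU).mpr hWlt)
      (termLT_trans h3 ((termLT_monMul_iff mV).mpr hTult))
  have hqsold : qs ∈ Sold := by
    refine ⟨hqsG, mUs, mVs, hUs, hVs, ?_⟩
    rw [← hWU]
    exact (termLT_monMul_iff mUs).mpr hWlt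
  have hqsnew : qs ∉ Snew := by
    rintro ⟨-, mU, mV, h1, h2, h3⟩
    rw [isLM_unique h1 hUs, isLM_unique h2 hVs] at h3
    have h4 : termLT mo (monMul Tu' mVs) (monMul Tu mVs) := (termLT_monMul_iff mVs).mpr hTult
    have h5 := termLT_trans h3 h4
    rw [hWU] at h5
    exact termLT_irrefl _ h5
  have hss : Snew ⊂ Sold := ⟨hsub, fun hcon => hqsnew (hcon hqsold)⟩
  exact Set.ncard_lt_ncard hss (hfin.subset (fun q hq => hq.1))

/-- Context predicate: no element of `G` reduces the monomial `Wv` within signature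
budget `Tu`. -/
abbrev HCpred (π : O) (mo : MonomialOrder (Fin n))
    (G : Set (TateAlgebra n O π × TateAlgebra n O π)) (Wv Tu : TMon n) : Prop :=
  ∀ q' ∈ G, ∀ mV' : TMon n, IsLM π mo (q'.2 : MvPowerSeries (Fin n) O) mV' →
    monDvd mV' Wv → ∀ s2 : Option (TMon n),
    IsLMopt π mo (q'.1 : MvPowerSeries (Fin n) O) s2 →
    optLE mo (optMul (monDiv Wv mV') s2) (some Tu) → False

abbrev MainP (π : O) (mo : MonomialOrder (Fin n)) (I0 : Ideal (TateAlgebra n O π))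
    (f : TateAlgebra n O π) (G : Set (TateAlgebra n O π × TateAlgebra n O π))
    (N : ℕ × ℕ × mo.syn) : Prop :=
  ∀ u v : TateAlgebra n O π, (u, v) ∈ SigMod I0 f →
    ∀ Tu Wv : TMon n, IsLM π mo (u : MvPowerSeries (Fin n) O) Tu →
    IsLM π mo (v : MvPowerSeries (Fin n) O) Wv →
    (nRho π mo G Tu Wv, (Wv.1 + 1 - Tu.1, mo.toSyn Tu.2)) = N →
    HCpred π mo G Wv Tu → False

lemma main (hπ : Irreducible π) (hfin : G.Finite) (hGM : G ⊆ SigMod I0 f)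
    (h1f : ((1 : TateAlgebra n O π), f) ∈ G)
    (hG0 : IsGB π mo {g : TateAlgebra n O π | ((0 : TateAlgebra n O π), g) ∈ G} I0)
    (hcov : ∀ p ∈ G, ∀ q ∈ G, ∀ r, IsJPair π mo p q r → CoveredBy π mo r G)
    {Tf : TMon n} (hTf : IsLM π mo (f : MvPowerSeries (Fin n) O) Tf) :
    ∀ N : ℕ × ℕ × mo.syn, MainP π mo I0 f G N := by
  classical
  have hwf : WellFounded (Prod.Lex (· < · : ℕ → ℕ → Prop)
      (Prod.Lex (· < · : ℕ → ℕ → Prop) (· < · : mo.syn → mo.syn → Prop))) :=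
    WellFounded.prod_lex wellFounded_lt (WellFounded.prod_lex wellFounded_lt wellFounded_lt)
  intro N
  refine hwf.induction (C := MainP π mo I0 f G) N ?_
  intro N IH u v hM Tu Wv hTu hWv hNeq HC
  subst hNeq
  have hv0 : (v : MvPowerSeries (Fin n) O) ≠ 0 := isLM_ne_zero hWv
  -- using the Gröbner basis property of the zero-signature part
  have hGzero : ∀ h : TateAlgebra n O π, h ∈ I0 → (h : MvPowerSeries (Fin n) O) ≠ 0 →
      IsLM π mo (h : MvPowerSeries (Fin n) O) Wv → False := by
    intro h hI hne hmh
    obtain ⟨g, hgG0, mg, hmg, hmgdvd⟩ := hG0.2 h hI hne Wv hmh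
    exact HC ((0 : TateAlgebra n O π), g) hgG0 mg hmg hmgdvd none coeTA_zero (optLE_none _)
  -- Step 1 : `Wv ≤ Tu * Tf`
  have hUF : IsLM π mo ((u : MvPowerSeries (Fin n) O) * (f : MvPowerSeries (Fin n) O))
      (monMul Tu Tf) := isLM_mul hπ hTu hTf
  have hI3 : termLE mo Wv (monMul Tu Tf) := by
    rcases termLT_trichot (mo := mo) (monMul Tu Tf) Wv with hlt | heq | hgt
    · exfalso
      have hhI : u * f - v ∈ I0 := hM
      have hcoe : ((u * f - v : TateAlgebra n O π) : MvPowerSeries (Fin n) O)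
          = (u : MvPowerSeries (Fin n) O) * (f : MvPowerSeries (Fin n) O) - (v : MvPowerSeries (Fin n) O) := rfl
      have hLMh : IsLM π mo ((u * f - v : TateAlgebra n O π) : MvPowerSeries (Fin n) O) Wv := by
        have h1 : IsLM π mo ((v : MvPowerSeries (Fin n) O)
            + -((u : MvPowerSeries (Fin n) O) * (f : MvPowerSeries (Fin n) O))) Wv :=
          isLM_add_lt hπ hWv (isLM_neg hUF) hlt
        have h2 : -((v : MvPowerSeries (Fin n) O)
            + -((u : MvPowerSeries (Fin n) O) * (f : MvPowerSeries (Fin n) O)))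
            = ((u * f - v : TateAlgebra n O π) : MvPowerSeries (Fin n) O) := by
          rw [hcoe]; ring
        rw [← h2]
        exact isLM_neg h1
      exact hGzero _ hhI (isLM_ne_zero hLMh) hLMh
    · exact Or.inl heq.symm
    · exact Or.inr hgt
  have hTuWv : Tu.1 ≤ Wv.1 := by
    rcases hI3 with heq | hlt
    · rw [heq]
      exact Nat.le_add_right _ _
    · rcases hlt with h' | ⟨h', -⟩
      · simp only [monMul] at h'; omega
      · simp only [monMul] at h'; omega
  by_cases hsyz : ∃ q' ∈ G, (q'.2 : MvPowerSeries (Fin n) O) = 0 ∧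
      ∃ mU', IsLM π mo (q'.1 : MvPowerSeries (Fin n) O) mU' ∧ monDvd mU' Tu
  · -- B4 : reduce the signature by a syzygy
    obtain ⟨q', hq'G, hq'2, mU', hU', hdvdU'⟩ := hsyz
    obtain ⟨c, hcex, hcLM, hccoeff⟩ := exists_reducer hπ hTu hU' hdvdU'
    have hhcoe := coe_constTA_monTA (π := π) c (monDiv Tu mU')
    set hh := constTA π c * monTA π (monDiv Tu mU') with hhdef
    have hM' : (u - hh * q'.1, v - hh * q'.2) ∈ SigMod I0 f := sigMod_sub_mul hM (hGM hq'G) hh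
    have hv' : v - hh * q'.2 = v := by
      rw [coeTA_eq_zero hq'2, mul_zero, sub_zero]
    rw [hv'] at hM'
    have hcLM' : IsLM π mo ((hh * q'.1 : TateAlgebra n O π) : MvPowerSeries (Fin n) O) Tu := by
      rw [coeTA_mul, hhcoe]; exact hcLM
    have hccoeff' : coeff Tu.2 ((hh * q'.1 : TateAlgebra n O π) : MvPowerSeries (Fin n) O)
        = coeff Tu.2 (u : MvPowerSeries (Fin n) O) := by
      rw [coeTA_mul, hhcoe]; exact hccoeff
    by_cases hu' : ((u - hh * q'.1 : TateAlgebra n O π) : MvPowerSeries (Fin n) O) = 0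
    · have hz : u - hh * q'.1 = 0 := coeTA_eq_zero hu'
      rw [mem_sigMod, hz, zero_mul, zero_sub] at hM'
      exact hGzero v (neg_mem_iff.mp hM') hv0 hWv
    · obtain ⟨Tu', hTu'⟩ := lm_exists hπ (u - hh * q'.1).2 hu'
      have hltTu : termLT mo Tu' Tu :=
        isLM_sub_lt hπ hTu hcLM' hccoeff'.symm (by rw [← coeTA_sub]; exact hTu')
      refine IH _ (measure_lt_sig hfin hltTu hTuWv) (u - hh * q'.1) v hM' Tu' Wv hTu' hWv rfl ?_
      intro q2 hq2G mV2 hV2 hdvd2 s22 hs22 hle2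
      exact HC q2 hq2G mV2 hV2 hdvd2 s22 hs22 (optLE_some_mono hle2 (termLE_of_lt hltTu))
  · -- no syzygy divides the current signature
    push_neg at hsyz
    have hNOSYZ : ∀ q'' ∈ G, (q''.2 : MvPowerSeries (Fin n) O) = 0 →
        ∀ mU'', IsLM π mo (q''.1 : MvPowerSeries (Fin n) O) mU'' → ¬ monDvd mU'' Tu := by
      intro q'' hq'' h2 mU'' hU'' hdvd''
      exact hsyz q'' hq'' h2 mU'' hU'' hdvd''
    -- the set of candidate reduction values `w`
    have hSfin : {w : TMon n | ∃ q' ∈ G, ∃ mU' mV',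
        IsLM π mo (q'.1 : MvPowerSeries (Fin n) O) mU' ∧
        IsLM π mo (q'.2 : MvPowerSeries (Fin n) O) mV' ∧ monDvd mU' Tu ∧
        w = monMul (monDiv Tu mU') mV'}.Finite := by
      have hsub : {w : TMon n | ∃ q' ∈ G, ∃ mU' mV',
          IsLM π mo (q'.1 : MvPowerSeries (Fin n) O) mU' ∧
          IsLM π mo (q'.2 : MvPowerSeries (Fin n) O) mV' ∧ monDvd mU' Tu ∧
          w = monMul (monDiv Tu mU') mV'} ⊆ ⋃ q' ∈ G, {w : TMon n | ∃ mU' mV',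
          IsLM π mo (q'.1 : MvPowerSeries (Fin n) O) mU' ∧
          IsLM π mo (q'.2 : MvPowerSeries (Fin n) O) mV' ∧ monDvd mU' Tu ∧
          w = monMul (monDiv Tu mU') mV'} := by
        rintro w ⟨q', hq'G, h⟩
        exact Set.mem_biUnion hq'G h
      refine Set.Finite.subset (Set.Finite.biUnion hfin (fun q' hq' => ?_)) hsub
      apply Set.Subsingleton.finite
      rintro w1 ⟨mU1, mV1, hU1, hV1, -, rfl⟩ w2 ⟨mU2, mV2, hU2, hV2, -, rfl⟩
      rw [isLM_unique hU1 hU2, isLM_unique hV1 hV2]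
    have hSne : {w : TMon n | ∃ q' ∈ G, ∃ mU' mV',
        IsLM π mo (q'.1 : MvPowerSeries (Fin n) O) mU' ∧
        IsLM π mo (q'.2 : MvPowerSeries (Fin n) O) mV' ∧ monDvd mU' Tu ∧
        w = monMul (monDiv Tu mU') mV'}.Nonempty := by
      refine ⟨monMul (monDiv Tu ((0, 0) : TMon n)) Tf,
        ((1 : TateAlgebra n O π), f), h1f, (0, 0), Tf, ?_, hTf, ⟨Nat.zero_le _, zero_le⟩, rfl⟩
      rw [show (((1 : TateAlgebra n O π), f).1 : MvPowerSeries (Fin n) O) = 1 from rfl]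
      exact isLM_one hπ
    obtain ⟨wstar, hwS, hwmin⟩ := exists_termLT_min hSfin hSne
    obtain ⟨qs, hqsG, mUs, mVs, hUs, hVs, hdvdUs, rfl⟩ := hwS
    have hMIN : ∀ q'' ∈ G, ∀ mU'' mV'',
        IsLM π mo (q''.1 : MvPowerSeries (Fin n) O) mU'' →
        IsLM π mo (q''.2 : MvPowerSeries (Fin n) O) mV'' → monDvd mU'' Tu →
        ¬ termLT mo (monMul (monDiv Tu mU'') mV'') (monMul (monDiv Tu mUs) mVs) := by
      intro q'' hq''G mU'' mV'' h1 h2 h3 hltw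
      exact hwmin _ ⟨q'', hq''G, mU'', mV'', h1, h2, h3, rfl⟩ hltw
    -- the exact reducer for the signature
    obtain ⟨c, hcex, hcLM, hccoeff⟩ := exists_reducer hπ hTu hUs hdvdUs
    have hhcoe := coe_constTA_monTA (π := π) c (monDiv Tu mUs)
    set hh := constTA π c * monTA π (monDiv Tu mUs) with hhdef
    have hM' : (u - hh * qs.1, v - hh * qs.2) ∈ SigMod I0 f := sigMod_sub_mul hM (hGM hqsG) hh
    have hcLM' : IsLM π mo ((hh * qs.1 : TateAlgebra n O π) : MvPowerSeries (Fin n) O) Tu := by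
      rw [coeTA_mul, hhcoe]; exact hcLM
    have hccoeff' : coeff Tu.2 ((hh * qs.1 : TateAlgebra n O π) : MvPowerSeries (Fin n) O)
        = coeff Tu.2 (u : MvPowerSeries (Fin n) O) := by
      rw [coeTA_mul, hhcoe]; exact hccoeff
    have hq2LM : IsLM π mo ((hh * qs.2 : TateAlgebra n O π) : MvPowerSeries (Fin n) O)
        (monMul (monDiv Tu mUs) mVs) := by
      rw [coeTA_mul, hhcoe]
      exact isLM_monomul hπ (monDiv Tu mUs) hcex.1 hcex.2 hVs
    rcases termLT_trichot (mo := mo) (monMul (monDiv Tu mUs) mVs) Wv with hB3 | hB1 | hB2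
    · -- B3 : the reduction does not affect the leading monomial of `v`
      have hvmLM : IsLM π mo ((v - hh * qs.2 : TateAlgebra n O π) : MvPowerSeries (Fin n) O)
          Wv := by
        have h1 : IsLM π mo ((v : MvPowerSeries (Fin n) O)
            + -((hh * qs.2 : TateAlgebra n O π) : MvPowerSeries (Fin n) O)) Wv :=
          isLM_add_lt hπ hWv (isLM_neg hq2LM) hB3
        rw [coeTA_sub, sub_eq_add_neg]
        exact h1
      by_cases hu' : ((u - hh * qs.1 : TateAlgebra n O π) : MvPowerSeries (Fin n) O) = 0
      · have hz : u - hh * qs.1 = 0 := coeTA_eq_zero hu'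
        rw [mem_sigMod] at hM'
        simp only [hz, zero_mul, zero_sub] at hM'
        exact hGzero _ (neg_mem_iff.mp hM') (isLM_ne_zero hvmLM) hvmLM
      · obtain ⟨Tu', hTu'⟩ := lm_exists hπ (u - hh * qs.1).2 hu'
        have hltTu : termLT mo Tu' Tu :=
          isLM_sub_lt hπ hTu hcLM' hccoeff'.symm (by rw [← coeTA_sub]; exact hTu')
        refine IH _ (measure_lt_sig hfin hltTu hTuWv) (u - hh * qs.1) (v - hh * qs.2) hM'
          Tu' Wv hTu' hvmLM rfl ?_
        intro q2 hq2G mV2 hV2 hdvd2 s22 hs22 hle2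
        exact HC q2 hq2G mV2 hV2 hdvd2 s22 hs22 (optLE_some_mono hle2 (termLE_of_lt hltTu))
    · -- B1 : the minimal ratio reaches `Wv`, contradiction with `HC`
      have hdvdV : monDvd mVs Wv := hB1 ▸ monDvd_monMul_self mVs (monDiv Tu mUs)
      refine HC qs hqsG mVs hVs hdvdV (some mUs) hUs ?_
      have h1 : monDiv Wv mVs = monDiv Tu mUs := by
        rw [← hB1]
        exact monDiv_cancel_monMul _ _
      have h2 : monMul (monDiv Tu mUs) mUs = Tu := monDiv_monMul_cancel hdvdUs
      show optLE mo (some (monMul (monDiv Wv mVs) mUs)) (some Tu)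
      rw [h1, h2]
      exact Or.inl rfl
    · -- B2 : the reduction increases the leading monomial of `v` to `wstar`
      have hvmLM : IsLM π mo ((v - hh * qs.2 : TateAlgebra n O π) : MvPowerSeries (Fin n) O)
          (monMul (monDiv Tu mUs) mVs) := by
        have h1 : IsLM π mo (((hh * qs.2 : TateAlgebra n O π) : MvPowerSeries (Fin n) O)
            + -(v : MvPowerSeries (Fin n) O)) (monMul (monDiv Tu mUs) mVs) :=
          isLM_add_lt hπ hq2LM (isLM_neg hWv) hB2
        have h2 : -(((hh * qs.2 : TateAlgebra n O π) : MvPowerSeries (Fin n) O)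
            + -(v : MvPowerSeries (Fin n) O))
            = ((v - hh * qs.2 : TateAlgebra n O π) : MvPowerSeries (Fin n) O) := by
          rw [coeTA_sub]; ring
        rw [← h2]
        exact isLM_neg h1
      by_cases hu' : ((u - hh * qs.1 : TateAlgebra n O π) : MvPowerSeries (Fin n) O) = 0
      · have hz : u - hh * qs.1 = 0 := coeTA_eq_zero hu'
        rw [mem_sigMod] at hM'
        simp only [hz, zero_mul, zero_sub] at hM'
        obtain ⟨g, hgG0, mg, hmg, hmgdvd⟩ :=
          hG0.2 _ (neg_mem_iff.mp hM') (isLM_ne_zero hvmLM) _ hvmLM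
        exact crux hπ hcov hqsG hUs hVs hdvdUs hMIN hNOSYZ hgG0 hmg hmgdvd
          (s2 := none) coeTA_zero trivial
      · obtain ⟨Tu', hTu'⟩ := lm_exists hπ (u - hh * qs.1).2 hu'
        have hltTu : termLT mo Tu' Tu :=
          isLM_sub_lt hπ hTu hcLM' hccoeff'.symm (by rw [← coeTA_sub]; exact hTu')
        have hWU : monMul (monMul (monDiv Tu mUs) mVs) mUs = monMul Tu mVs := by
          rw [monMul_assoc, monMul_comm mVs mUs, ← monMul_assoc, monDiv_monMul_cancel hdvdUs]
        refine IH _ (measure_lt_B2 hfin hqsG hUs hVs hWU hB2 hltTu) (u - hh * qs.1)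
          (v - hh * qs.2) hM' Tu' (monMul (monDiv Tu mUs) mVs) hTu' hvmLM rfl ?_
        intro q2 hq2G mV2 hV2 hdvd2 s22 hs22 hle2
        exact crux hπ hcov hqsG hUs hVs hdvdUs hMIN hNOSYZ hq2G hV2 hdvd2 hs22
          (optLT_some_of_le_of_lt hle2 hltTu)

end Main

end TateAux

open TateStmt MvPowerSeries TateAux

variable {n : ℕ} {O : Type*} [CommRing O] [IsDomain O] [IsDiscreteValuationRing O]

/-- Cover theorem for Tate algebras: if the finite set `G ⊆ M` contains
`(1,f)`, `{g : (0,g) ∈ G}` is a Gröbner basis of `I₀`, and every J-pair of `G` is covered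
by `G`, then `G` is a strong Gröbner basis of `M`. -/
theorem statement_8 (π : O) (hπ : Irreducible π) (mo : MonomialOrder (Fin n))
    (I0 : Ideal (TateAlgebra n O π)) (f : TateAlgebra n O π)
    (G : Set (TateAlgebra n O π × TateAlgebra n O π))
    (hfin : G.Finite) (hGM : G ⊆ SigMod I0 f)
    (h1f : ((1 : TateAlgebra n O π), f) ∈ G)
    (hG0 : IsGB π mo {g : TateAlgebra n O π | ((0 : TateAlgebra n O π), g) ∈ G} I0)
    (hcov : ∀ p ∈ G, ∀ q ∈ G, ∀ r, IsJPair π mo p q r → CoveredBy π mo r G) :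
    IsSGB π mo I0 f G := by
  classical
  refine ⟨hfin, hGM, ?_⟩
  intro p hp hp0
  by_contra hnored
  push_neg at hnored
  by_cases hu0 : (p.1 : MvPowerSeries (Fin n) O) = 0
  · -- `u = 0` : then `v ∈ I₀` and a Gröbner basis element of `I₀` top-reduces `p`
    have hv0 : (p.2 : MvPowerSeries (Fin n) O) ≠ 0 := by
      intro h
      exact hp0 (Prod.ext (coeTA_eq_zero hu0) (coeTA_eq_zero h))
    have hvI : p.2 ∈ I0 := by
      have h1 := hp
      rw [mem_sigMod, coeTA_eq_zero hu0, zero_mul, zero_sub] at h1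
      exact neg_mem_iff.mp h1
    obtain ⟨Wv, hWv⟩ := lm_exists hπ p.2.2 hv0
    obtain ⟨g, hgG0, mg, hmg, hmgdvd⟩ := hG0.2 _ hvI hv0 _ hWv
    exact hnored _ hgG0 (Or.inr ⟨neTA hv0, neTA (isLM_ne_zero hmg), Wv, mg, hWv, hmg,
      hmgdvd, none, none, hu0, coeTA_zero, Or.inl rfl⟩)
  · obtain ⟨Tu, hTu⟩ := lm_exists hπ p.1.2 hu0
    by_cases hf0 : (f : MvPowerSeries (Fin n) O) = 0
    · -- `f = 0` : then `(1, f) = (1, 0)` is a syzygy which top-reduces `p`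
      refine hnored _ h1f (Or.inl ⟨coeTA_eq_zero hf0, Tu, (0, 0), hTu, ?_,
        ⟨Nat.zero_le _, zero_le⟩⟩)
      rw [show (((1 : TateAlgebra n O π), f).1 : MvPowerSeries (Fin n) O) = 1 from rfl]
      exact isLM_one hπ
    · obtain ⟨Tf, hTf⟩ := lm_exists hπ f.2 hf0
      have hmain := TateAux.main hπ hfin hGM h1f hG0 hcov hTf
      by_cases hv0 : (p.2 : MvPowerSeries (Fin n) O) = 0
      · -- `v = 0` : perform one reduction step by hand, then invoke `main`
        have hp2 : p.2 = 0 := coeTA_eq_zero hv0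
        have hNOSYZ : ∀ q'' ∈ G, (q''.2 : MvPowerSeries (Fin n) O) = 0 →
            ∀ mU'', IsLM π mo (q''.1 : MvPowerSeries (Fin n) O) mU'' → ¬ monDvd mU'' Tu := by
          intro q'' hq''G h2 mU'' hU'' hdvd''
          exact hnored q'' hq''G (Or.inl ⟨coeTA_eq_zero h2, Tu, mU'', hTu, hU'', hdvd''⟩)
        have hSfin : {w : TMon n | ∃ q' ∈ G, ∃ mU' mV',
            IsLM π mo (q'.1 : MvPowerSeries (Fin n) O) mU' ∧
            IsLM π mo (q'.2 : MvPowerSeries (Fin n) O) mV' ∧ monDvd mU' Tu ∧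
            w = monMul (monDiv Tu mU') mV'}.Finite := by
          have hsub : {w : TMon n | ∃ q' ∈ G, ∃ mU' mV',
              IsLM π mo (q'.1 : MvPowerSeries (Fin n) O) mU' ∧
              IsLM π mo (q'.2 : MvPowerSeries (Fin n) O) mV' ∧ monDvd mU' Tu ∧
              w = monMul (monDiv Tu mU') mV'} ⊆ ⋃ q' ∈ G, {w : TMon n | ∃ mU' mV',
              IsLM π mo (q'.1 : MvPowerSeries (Fin n) O) mU' ∧
              IsLM π mo (q'.2 : MvPowerSeries (Fin n) O) mV' ∧ monDvd mU' Tu ∧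
              w = monMul (monDiv Tu mU') mV'} := by
            rintro w ⟨q', hq'G, h⟩
            exact Set.mem_biUnion hq'G h
          refine Set.Finite.subset (Set.Finite.biUnion hfin (fun q' hq' => ?_)) hsub
          apply Set.Subsingleton.finite
          rintro w1 ⟨mU1, mV1, hU1, hV1, -, rfl⟩ w2 ⟨mU2, mV2, hU2, hV2, -, rfl⟩
          rw [isLM_unique hU1 hU2, isLM_unique hV1 hV2]
        have hSne : {w : TMon n | ∃ q' ∈ G, ∃ mU' mV',
            IsLM π mo (q'.1 : MvPowerSeries (Fin n) O) mU' ∧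
            IsLM π mo (q'.2 : MvPowerSeries (Fin n) O) mV' ∧ monDvd mU' Tu ∧
            w = monMul (monDiv Tu mU') mV'}.Nonempty := by
          refine ⟨monMul (monDiv Tu ((0, 0) : TMon n)) Tf,
            ((1 : TateAlgebra n O π), f), h1f, (0, 0), Tf, ?_, hTf,
            ⟨Nat.zero_le _, zero_le⟩, rfl⟩
          rw [show (((1 : TateAlgebra n O π), f).1 : MvPowerSeries (Fin n) O) = 1 from rfl]
          exact isLM_one hπ
        obtain ⟨wstar, hwS, hwmin⟩ := exists_termLT_min hSfin hSne
        obtain ⟨qs, hqsG, mUs, mVs, hUs, hVs, hdvdUs, rfl⟩ := hwS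
        have hMIN : ∀ q'' ∈ G, ∀ mU'' mV'',
            IsLM π mo (q''.1 : MvPowerSeries (Fin n) O) mU'' →
            IsLM π mo (q''.2 : MvPowerSeries (Fin n) O) mV'' → monDvd mU'' Tu →
            ¬ termLT mo (monMul (monDiv Tu mU'') mV'') (monMul (monDiv Tu mUs) mVs) := by
          intro q'' hq''G mU'' mV'' h1 h2 h3 hltw
          exact hwmin _ ⟨q'', hq''G, mU'', mV'', h1, h2, h3, rfl⟩ hltw
        obtain ⟨c, hcex, hcLM, hccoeff⟩ := exists_reducer hπ hTu hUs hdvdUs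
        have hhcoe := coe_constTA_monTA (π := π) c (monDiv Tu mUs)
        set hh := constTA π c * monTA π (monDiv Tu mUs) with hhdef
        have hM' : (p.1 - hh * qs.1, p.2 - hh * qs.2) ∈ SigMod I0 f :=
          sigMod_sub_mul hp (hGM hqsG) hh
        have hcLM' : IsLM π mo ((hh * qs.1 : TateAlgebra n O π) : MvPowerSeries (Fin n) O)
            Tu := by
          rw [coeTA_mul, hhcoe]; exact hcLM
        have hccoeff' : coeff Tu.2 ((hh * qs.1 : TateAlgebra n O π) : MvPowerSeries (Fin n) O)
            = coeff Tu.2 (p.1 : MvPowerSeries (Fin n) O) := by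
          rw [coeTA_mul, hhcoe]; exact hccoeff
        have hq2LM : IsLM π mo ((hh * qs.2 : TateAlgebra n O π) : MvPowerSeries (Fin n) O)
            (monMul (monDiv Tu mUs) mVs) := by
          rw [coeTA_mul, hhcoe]
          exact isLM_monomul hπ (monDiv Tu mUs) hcex.1 hcex.2 hVs
        have hvmLM : IsLM π mo
            ((p.2 - hh * qs.2 : TateAlgebra n O π) : MvPowerSeries (Fin n) O)
            (monMul (monDiv Tu mUs) mVs) := by
          rw [hp2, zero_sub]
          rw [show ((-(hh * qs.2) : TateAlgebra n O π) : MvPowerSeries (Fin n) O)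
            = -(((hh * qs.2 : TateAlgebra n O π)) : MvPowerSeries (Fin n) O) from rfl]
          exact isLM_neg hq2LM
        by_cases hu' : ((p.1 - hh * qs.1 : TateAlgebra n O π) : MvPowerSeries (Fin n) O) = 0
        · have hz : p.1 - hh * qs.1 = 0 := coeTA_eq_zero hu'
          have hM'' := hM'
          rw [mem_sigMod] at hM''
          simp only [hz, zero_mul, zero_sub] at hM''
          obtain ⟨g, hgG0, mg, hmg, hmgdvd⟩ :=
            hG0.2 _ (neg_mem_iff.mp hM'') (isLM_ne_zero hvmLM) _ hvmLM
          exact crux hπ hcov hqsG hUs hVs hdvdUs hMIN hNOSYZ hgG0 hmg hmgdvd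
            (s2 := none) coeTA_zero trivial
        · obtain ⟨Tu', hTu'⟩ := lm_exists hπ (p.1 - hh * qs.1).2 hu'
          have hltTu : termLT mo Tu' Tu :=
            isLM_sub_lt hπ hTu hcLM' hccoeff'.symm (by rw [← coeTA_sub]; exact hTu')
          refine hmain _ (p.1 - hh * qs.1) (p.2 - hh * qs.2) hM' Tu'
            (monMul (monDiv Tu mUs) mVs) hTu' hvmLM rfl ?_
          intro q2 hq2G mV2 hV2 hdvd2 s22 hs22 hle2
          exact crux hπ hcov hqsG hUs hVs hdvdUs hMIN hNOSYZ hq2G hV2 hdvd2 hs22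
            (optLT_some_of_le_of_lt hle2 hltTu)
      · -- `v ≠ 0` : invoke `main` directly
        obtain ⟨Wv, hWv⟩ := lm_exists hπ p.2.2 hv0
        refine hmain _ p.1 p.2 hp Tu Wv hTu hWv rfl ?_
        intro q' hq'G mV' hV' hdvdV s2 hs2 hle
        exact hnored q' hq'G (Or.inr ⟨neTA hv0, neTA (isLM_ne_zero hV'), Wv, mV', hWv, hV',
          hdvdV, some Tu, s2, hTu, hs2, hle⟩)
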